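/- arXiv:1009.5656 — 2 statements merged into one kernel-verified Lean document; each statement's English description precedes it below -/
import Mathlib

section
/- If c ∈ SO(ℝ₊) and α is a slowly oscillating shift, then c∘α ∈ SO(ℝ₊), c − c∘α is bounded and continuous, and c(t) − c(α(t)) → 0 as t → 0 and as t → ∞. -/
open Filter Set

noncomputable def osc {E : Type*} [NormedAddCommGroup E] (f : ℝ → E) (a b : ℝ) : ℝ :=
  sSup {d | ∃ t ∈ Set.Icc a b, ∃ τ ∈ Set.Icc a b, d = ‖f t - f τ‖}

def SO {E : Type*} [NormedAddCommGroup E] (f : ℝ → E) : Prop :=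
  ContinuousOn f (Set.Ioi 0) ∧ (∃ C, ∀ t ∈ Set.Ioi (0:ℝ), ‖f t‖ ≤ C) ∧
  ∀ l ∈ Set.Ioo (0:ℝ) 1,
    Tendsto (fun r => osc f (l * r) r) (nhdsWithin 0 (Set.Ioi 0)) (nhds 0) ∧
    Tendsto (fun r => osc f (l * r) r) atTop (nhds 0)

section aux
variable {E : Type*} [NormedAddCommGroup E]

lemma osc_nonneg (f : ℝ → E) (a b : ℝ) : 0 ≤ osc f a b :=
  Real.sSup_nonneg (by rintro x ⟨t, ht, τ, hτ, rfl⟩; exact norm_nonneg _)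

lemma osc_bddAbove {f : ℝ → E} {a b K : ℝ} (hK : ∀ x ∈ Icc a b, ‖f x‖ ≤ K) :
    BddAbove {d | ∃ t ∈ Set.Icc a b, ∃ τ ∈ Set.Icc a b, d = ‖f t - f τ‖} := by
  refine ⟨2*K, ?_⟩
  rintro x ⟨t, ht, τ, hτ, rfl⟩
  calc ‖f t - f τ‖ ≤ ‖f t‖ + ‖f τ‖ := norm_sub_le _ _
    _ ≤ K + K := add_le_add (hK t ht) (hK τ hτ)
    _ = 2*K := by ring

lemma norm_sub_le_osc {f : ℝ → E} {a b K t τ : ℝ} (hK : ∀ x ∈ Icc a b, ‖f x‖ ≤ K)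
    (ht : t ∈ Icc a b) (hτ : τ ∈ Icc a b) : ‖f t - f τ‖ ≤ osc f a b :=
  le_csSup (osc_bddAbove hK) ⟨t, ht, τ, hτ, rfl⟩

lemma osc_comp_le {f : ℝ → E} {α : ℝ → ℝ} {a b a' b' K : ℝ}
    (hmaps : MapsTo α (Icc a b) (Icc a' b')) (hK : ∀ x ∈ Icc a' b', ‖f x‖ ≤ K) :
    osc (fun t => f (α t)) a b ≤ osc f a' b' := by
  refine Real.sSup_le ?_ (osc_nonneg f a' b')
  rintro x ⟨t, ht, τ, hτ, rfl⟩
  exact norm_sub_le_osc hK (hmaps ht) (hmaps hτ)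
end aux

theorem SO_compose_shift (c : ℝ → ℂ) (α α' : ℝ → ℝ)
    (hc : SO c)
    (hbij : Set.BijOn α (Set.Ioi 0) (Set.Ioi 0))
    (hmono : StrictMonoOn α (Set.Ioi 0))
    (hderiv : ∀ t ∈ Set.Ioi (0:ℝ), HasDerivAt α (α' t) t)
    (h0 : Tendsto α (nhdsWithin 0 (Set.Ioi 0)) (nhds 0))
    (hinf : Tendsto α atTop atTop)
    (hfix : ∀ t ∈ Set.Ioi (0:ℝ), α t ≠ t)
    (hlog_bdd : ∃ C, ∀ t ∈ Set.Ioi (0:ℝ), |Real.log (α' t)| ≤ C)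
    (hso : SO α') :
    SO (fun t => c (α t)) ∧
    (ContinuousOn (fun t => c t - c (α t)) (Set.Ioi 0) ∧
      ∃ C, ∀ t ∈ Set.Ioi (0:ℝ), ‖c t - c (α t)‖ ≤ C) ∧
    Tendsto (fun t => c t - c (α t)) (nhdsWithin 0 (Set.Ioi 0)) (nhds 0) ∧
    Tendsto (fun t => c t - c (α t)) atTop (nhds 0) := by
  obtain ⟨hc_cont, ⟨Cc, hCc⟩, hc_osc⟩ := hc
  obtain ⟨C, hC⟩ := hlog_bdd
  have hC0 : 0 ≤ C := le_trans (abs_nonneg _) (hC 1 (by norm_num))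
  set D : ℝ := C + 1 with hDdef
  have hD0 : 0 < D := by linarith
  set m : ℝ := Real.exp (-D) with hmdef
  set M : ℝ := Real.exp D with hMdef
  have hm0 : 0 < m := Real.exp_pos _
  have hM0 : 0 < M := Real.exp_pos _
  have hm1 : m < 1 := by
    rw [hmdef]; exact Real.exp_lt_one_iff.mpr (by linarith)
  have hM1 : 1 < M := by
    rw [hMdef]; exact Real.one_lt_exp_iff.mpr hD0
  have hmM : m < M := Real.exp_lt_exp.mpr (by linarith)
  have hα_cont : ContinuousOn α (Ioi 0) :=
    fun t ht => (hderiv t ht).continuousAt.continuousWithinAt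
  have hα'_cont : ContinuousOn α' (Ioi 0) := hso.1
  -- a point where α' is at least exp(-C)
  obtain ⟨ξ, hξmem, hξ⟩ : ∃ ξ ∈ Ioo (1:ℝ) 2, α' ξ = (α 2 - α 1) / (2 - 1) := by
    refine exists_hasDerivAt_eq_slope α α' one_lt_two ?_ ?_
    · exact hα_cont.mono (fun x hx => lt_of_lt_of_le one_pos hx.1)
    · exact fun x hx => hderiv x (lt_trans one_pos hx.1)
  have hξ0 : (0:ℝ) < ξ := lt_trans one_pos hξmem.1
  have hξpos : 0 < α' ξ := by
    rw [hξ]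
    have : α 1 < α 2 := hmono (by norm_num) (by norm_num) one_lt_two
    have h2 : (0:ℝ) < 2 - 1 := by norm_num
    exact div_pos (by linarith) h2
  -- lower bound for positive values of α'
  have hlow : ∀ t ∈ Ioi (0:ℝ), 0 < α' t → Real.exp (-C) ≤ α' t := by
    intro t ht hpos
    have h1 := (abs_le.mp (hC t ht)).1
    calc Real.exp (-C) ≤ Real.exp (Real.log (α' t)) := Real.exp_le_exp.mpr h1
      _ = α' t := Real.exp_log hpos
  -- α' is everywhere positive, by the intermediate value theorem
  have hα'pos : ∀ t ∈ Ioi (0:ℝ), 0 < α' t := by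
    intro t ht
    by_contra hneg
    push_neg at hneg
    set v : ℝ := Real.exp (-C) / 2 with hvdef
    have hv0 : 0 < v := by positivity
    have hvξ : v < α' ξ := by
      have := hlow ξ hξ0 hξpos
      have h2 : Real.exp (-C) / 2 < Real.exp (-C) := by
        have := Real.exp_pos (-C); linarith
      linarith
    have hsub : uIcc t ξ ⊆ Ioi (0:ℝ) := by
      intro x hx
      exact lt_of_lt_of_le (lt_min ht hξ0) hx.1
    have hIVT := intermediate_value_uIcc (hα'_cont.mono hsub)
    have hvmem : v ∈ uIcc (α' t) (α' ξ) := by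
      rw [Set.mem_uIcc]
      left; exact ⟨le_of_lt (lt_of_le_of_lt hneg hv0), le_of_lt hvξ⟩
    obtain ⟨s, hs, hsv⟩ := hIVT hvmem
    have hs0 : s ∈ Ioi (0:ℝ) := hsub hs
    have hlogv : Real.log v = -C - Real.log 2 := by
      rw [hvdef, Real.log_div (Real.exp_ne_zero _) two_ne_zero, Real.log_exp]
    have := hC s hs0
    rw [hsv, hlogv] at this
    have hlog2 : 0 < Real.log 2 := Real.log_pos one_lt_two
    have habs : |-C - Real.log 2| = C + Real.log 2 := by
      rw [abs_of_nonpos (by linarith)]; ring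
    rw [habs] at this
    linarith
  have hα'm : ∀ t ∈ Ioi (0:ℝ), m ≤ α' t := by
    intro t ht
    refine le_trans ?_ (hlow t ht (hα'pos t ht))
    exact Real.exp_le_exp.mpr (by linarith)
  have hα'M : ∀ t ∈ Ioi (0:ℝ), α' t ≤ M := by
    intro t ht
    have h1 := (abs_le.mp (hC t ht)).2
    calc α' t = Real.exp (Real.log (α' t)) := (Real.exp_log (hα'pos t ht)).symm
      _ ≤ Real.exp D := Real.exp_le_exp.mpr (by linarith)
  -- mean value theorem bounds
  have hMVT : ∀ s t : ℝ, 0 < s → s < t →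
      m * (t - s) ≤ α t - α s ∧ α t - α s ≤ M * (t - s) := by
    intro s t hs hst
    obtain ⟨ζ, hζmem, hζ⟩ : ∃ ζ ∈ Ioo s t, α' ζ = (α t - α s) / (t - s) := by
      refine exists_hasDerivAt_eq_slope α α' hst ?_ ?_
      · exact hα_cont.mono (fun x hx => lt_of_lt_of_le hs hx.1)
      · exact fun x hx => hderiv x (lt_trans hs hx.1)
    have hζ0 : (0:ℝ) < ζ := lt_trans hs hζmem.1
    have hts : 0 < t - s := by linarith
    have hm' := hα'm ζ hζ0
    have hM' := hα'M ζ hζ0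
    rw [hζ] at hm' hM'
    constructor
    · have := (le_div_iff₀ hts).mp hm'; linarith
    · have := (div_le_iff₀ hts).mp hM'; linarith
  -- comparison of α with linear functions
  have hαm : ∀ t ∈ Ioi (0:ℝ), m * t ≤ α t := by
    intro t ht
    have h2 : Tendsto (fun s => m * (t - s) + α s) (nhdsWithin 0 (Ioi 0)) (nhds (m * t)) := by
      have h3 : Tendsto (fun s : ℝ => m * (t - s)) (nhds 0) (nhds (m * (t - 0))) :=
        (continuous_const.mul (continuous_const.sub continuous_id)).tendsto 0
      have := (h3.mono_left nhdsWithin_le_nhds).add h0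
      simpa using this
    refine le_of_tendsto h2 ?_
    have hlt : ∀ᶠ s in nhdsWithin (0:ℝ) (Ioi 0), s < t :=
      Filter.Eventually.filter_mono nhdsWithin_le_nhds (eventually_lt_nhds ht)
    filter_upwards [self_mem_nhdsWithin, hlt] with s hs hst
    have := (hMVT s t hs hst).1
    linarith
  have hαM : ∀ t ∈ Ioi (0:ℝ), α t ≤ M * t := by
    intro t ht
    have h2 : Tendsto (fun s => M * (t - s) + α s) (nhdsWithin 0 (Ioi 0)) (nhds (M * t)) := by
      have h3 : Tendsto (fun s : ℝ => M * (t - s)) (nhds 0) (nhds (M * (t - 0))) :=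
        (continuous_const.mul (continuous_const.sub continuous_id)).tendsto 0
      have := (h3.mono_left nhdsWithin_le_nhds).add h0
      simpa using this
    refine ge_of_tendsto h2 ?_
    have hlt : ∀ᶠ s in nhdsWithin (0:ℝ) (Ioi 0), s < t :=
      Filter.Eventually.filter_mono nhdsWithin_le_nhds (eventually_lt_nhds ht)
    filter_upwards [self_mem_nhdsWithin, hlt] with s hs hst
    have := (hMVT s t hs hst).2
    have h0s : 0 ≤ α s := le_of_lt (hbij.mapsTo hs)
    linarith
  -- boundedness of c on intervals with positive left endpoint
  have hbdd : ∀ a b : ℝ, 0 < a → ∀ x ∈ Icc a b, ‖c x‖ ≤ Cc :=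
    fun a b ha x hx => hCc x (lt_of_lt_of_le ha hx.1)
  -- the key oscillation comparison
  have key : ∀ l ∈ Ioo (0:ℝ) 1, ∀ r : ℝ, 0 < r →
      osc (fun t => c (α t)) (l * r) r ≤ osc c (l * m / M * (M * r)) (M * r) := by
    intro l hl r hr
    have heq : l * m / M * (M * r) = m * (l * r) := by
      field_simp
    rw [heq]
    refine osc_comp_le ?_ (hbdd _ _ (mul_pos hm0 (mul_pos hl.1 hr)))
    intro x hx
    have hx0 : (0:ℝ) < x := lt_of_lt_of_le (mul_pos hl.1 hr) hx.1
    constructor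
    · exact le_trans (mul_le_mul_of_nonneg_left hx.1 hm0.le) (hαm x hx0)
    · exact le_trans (hαM x hx0) (mul_le_mul_of_nonneg_left hx.2 hM0.le)
  -- the scaling map r ↦ M r
  have hg0 : Tendsto (fun r : ℝ => M * r) (nhdsWithin 0 (Ioi 0)) (nhdsWithin 0 (Ioi 0)) := by
    apply tendsto_nhdsWithin_of_tendsto_nhds_of_eventually_within
    · have h3 : Tendsto (fun r : ℝ => M * r) (nhds 0) (nhds (M * 0)) :=
        (continuous_const.mul continuous_id).tendsto 0
      rw [mul_zero] at h3
      exact h3.mono_left nhdsWithin_le_nhds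
    · filter_upwards [self_mem_nhdsWithin] with r hr
      exact mul_pos hM0 hr
  have hgT : Tendsto (fun r : ℝ => M * r) atTop atTop :=
    Tendsto.const_mul_atTop hM0 tendsto_id
  -- oscillation of c ∘ α tends to zero
  have main_osc : ∀ l ∈ Ioo (0:ℝ) 1,
      Tendsto (fun r => osc (fun t => c (α t)) (l * r) r) (nhdsWithin 0 (Ioi 0)) (nhds 0) ∧
      Tendsto (fun r => osc (fun t => c (α t)) (l * r) r) atTop (nhds 0) := by
    intro l hl
    set μ : ℝ := l * m / M with hμdef
    have hμ : μ ∈ Ioo (0:ℝ) 1 := by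
      constructor
      · rw [hμdef]; exact div_pos (mul_pos hl.1 hm0) hM0
      · rw [hμdef, div_lt_one hM0]
        nlinarith [hl.1, hl.2, hm0, hm1, hM1]
    obtain ⟨T0, TT⟩ := hc_osc μ hμ
    have comp0 : Tendsto (fun r => osc c (μ * (M * r)) (M * r)) (nhdsWithin 0 (Ioi 0)) (nhds 0) :=
      T0.comp hg0
    have compT : Tendsto (fun r => osc c (μ * (M * r)) (M * r)) atTop (nhds 0) :=
      TT.comp hgT
    constructor
    · refine tendsto_of_tendsto_of_tendsto_of_le_of_le' tendsto_const_nhds comp0 ?_ ?_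
      · exact Filter.Eventually.of_forall (fun r => osc_nonneg _ _ _)
      · filter_upwards [self_mem_nhdsWithin] with r hr
        exact key l hl r hr
    · refine tendsto_of_tendsto_of_tendsto_of_le_of_le' tendsto_const_nhds compT ?_ ?_
      · exact Filter.Eventually.of_forall (fun r => osc_nonneg _ _ _)
      · filter_upwards [eventually_gt_atTop 0] with r hr
        exact key l hl r hr
  -- pointwise bound for the difference
  have diff_bound : ∀ t ∈ Ioi (0:ℝ), ‖c t - c (α t)‖ ≤ osc c (m / M * (M * t)) (M * t) := by
    intro t ht
    have ht' : (0:ℝ) < t := ht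
    have heq : m / M * (M * t) = m * t := by
      field_simp
    rw [heq]
    have h1 : t ∈ Icc (m * t) (M * t) := by
      constructor
      · nlinarith [mul_lt_mul_of_pos_right hm1 ht']
      · nlinarith [mul_lt_mul_of_pos_right hM1 ht']
    have h2 : α t ∈ Icc (m * t) (M * t) := ⟨hαm t ht, hαM t ht⟩
    exact norm_sub_le_osc (hbdd _ _ (mul_pos hm0 ht')) h1 h2
  have hν : m / M ∈ Ioo (0:ℝ) 1 := ⟨div_pos hm0 hM0, (div_lt_one hM0).mpr hmM⟩
  obtain ⟨S0, ST⟩ := hc_osc (m / M) hν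
  have Scomp0 : Tendsto (fun t => osc c (m / M * (M * t)) (M * t)) (nhdsWithin 0 (Ioi 0)) (nhds 0) :=
    S0.comp hg0
  have ScompT : Tendsto (fun t => osc c (m / M * (M * t)) (M * t)) atTop (nhds 0) :=
    ST.comp hgT
  have hcomp_cont : ContinuousOn (fun t => c (α t)) (Ioi 0) :=
    hc_cont.comp hα_cont hbij.mapsTo
  refine ⟨⟨hcomp_cont, ⟨Cc, fun t ht => hCc (α t) (hbij.mapsTo ht)⟩, main_osc⟩, ⟨?_, ?_⟩, ?_, ?_⟩
  · exact (hc_cont.mono (le_refl _)).sub hcomp_cont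
  · refine ⟨2 * Cc, fun t ht => ?_⟩
    calc ‖c t - c (α t)‖ ≤ ‖c t‖ + ‖c (α t)‖ := norm_sub_le _ _
      _ ≤ Cc + Cc := add_le_add (hCc t ht) (hCc (α t) (hbij.mapsTo ht))
      _ = 2 * Cc := by ring
  · rw [tendsto_zero_iff_norm_tendsto_zero]
    refine tendsto_of_tendsto_of_tendsto_of_le_of_le' tendsto_const_nhds Scomp0 ?_ ?_
    · exact Filter.Eventually.of_forall (fun t => norm_nonneg _)
    · filter_upwards [self_mem_nhdsWithin] with t ht
      exact diff_bound t ht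
  · rw [tendsto_zero_iff_norm_tendsto_zero]
    refine tendsto_of_tendsto_of_tendsto_of_le_of_le' tendsto_const_nhds ScompT ?_ ?_
    · exact Filter.Eventually.of_forall (fun t => norm_nonneg _)
    · filter_upwards [eventually_gt_atTop 0] with t ht
      exact diff_bound t ht
end

section
/- Let α be a slowly oscillating shift of (0,∞) with exponent function ω (so α(t) = t e^{ω(t)}), η(y) = y/(1−y), α̃ = η^{−1}∘α∘η, and c(y) = (1−α̃(y))/(1−y) for y ∈ (0,1). Then 0 < inf_{y∈(0,1)} c(y) ≤ sup_{y∈(0,1)} c(y) < ∞, and c∘η^{−1}(t) = (1+t)/(1+t e^{ω(t)}) is slowly oscillating at 0 and ∞ with limit 1 at 0. -/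
open Filter Set

noncomputable def alphaTilde (α : ℝ → ℝ) : ℝ → ℝ :=
  fun y => α (y / (1 - y)) / (1 + α (y / (1 - y)))

/-- Lipschitz bound for `exp` on `[-C, C]`. -/
lemma exp_lip_aux {a b C : ℝ} (ha : |a| ≤ C) (hb : |b| ≤ C) :
    |Real.exp a - Real.exp b| ≤ Real.exp C * |a - b| := by
  wlog hab : b ≤ a generalizing a b
  · rw [abs_sub_comm, abs_sub_comm a b]; exact this hb ha (le_of_not_ge hab)
  rw [abs_of_nonneg (sub_nonneg.2 (Real.exp_le_exp.2 hab)),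
      abs_of_nonneg (sub_nonneg.2 hab)]
  have h1 : Real.exp (b - a) ≥ 1 - (a - b) := by
    have := Real.add_one_le_exp (b - a); linarith
  have h2 : Real.exp a ≤ Real.exp C := Real.exp_le_exp.2 (le_of_abs_le ha)
  have h3 : Real.exp (b - a) * Real.exp a = Real.exp b := by
    rw [← Real.exp_add]; ring_nf
  nlinarith [Real.exp_pos a, Real.exp_pos b, Real.exp_pos (b-a), Real.exp_pos C]

lemma f_bounds_aux {t C w : ℝ} (ht : 0 < t) (hC : 0 ≤ C) (hw : |w| ≤ C) :
    Real.exp (-C) ≤ (1 + t) / (1 + t * Real.exp w) ∧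
    (1 + t) / (1 + t * Real.exp w) ≤ Real.exp C := by
  have hd : (0:ℝ) < 1 + t * Real.exp w := by positivity
  have hC1 : 1 ≤ Real.exp C := Real.one_le_exp hC
  have hmC : Real.exp (-C) ≤ 1 := Real.exp_le_one_iff.2 (by linarith)
  have hwl : Real.exp (-C) ≤ Real.exp w := Real.exp_le_exp.2 (by cases abs_le.1 hw; linarith)
  have hwu : Real.exp w ≤ Real.exp C := Real.exp_le_exp.2 (le_of_abs_le hw)
  have h4 : Real.exp (-C) * Real.exp w ≤ 1 := by
    rw [← Real.exp_add]; exact Real.exp_le_one_iff.2 (by cases abs_le.1 hw; linarith)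
  have h5 : 1 ≤ Real.exp C * Real.exp w := by
    rw [← Real.exp_add]; exact Real.one_le_exp (by cases abs_le.1 hw; linarith)
  constructor
  · rw [le_div_iff₀ hd]
    nlinarith
  · rw [div_le_iff₀ hd]
    nlinarith

lemma osc_nonneg_aux {E : Type*} [NormedAddCommGroup E] (f : ℝ → E) (a b : ℝ) :
    0 ≤ osc f a b :=
  Real.sSup_nonneg (by rintro x ⟨t, _, τ, _, rfl⟩; exact norm_nonneg _)

lemma osc_le_aux {E : Type*} [NormedAddCommGroup E] {f : ℝ → E} {a b B : ℝ} (hB : 0 ≤ B)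
    (h : ∀ t ∈ Set.Icc a b, ∀ τ ∈ Set.Icc a b, ‖f t - f τ‖ ≤ B) : osc f a b ≤ B :=
  Real.sSup_le (by rintro x ⟨t, ht, τ, hτ, rfl⟩; exact h t ht τ hτ) hB

lemma le_osc_aux {E : Type*} [NormedAddCommGroup E] {f : ℝ → E} {a b C : ℝ}
    (hbdd : ∀ t ∈ Set.Icc a b, ‖f t‖ ≤ C)
    {t τ : ℝ} (ht : t ∈ Set.Icc a b) (hτ : τ ∈ Set.Icc a b) :
    ‖f t - f τ‖ ≤ osc f a b := by
  apply le_csSup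
  · refine ⟨2 * C, ?_⟩
    rintro x ⟨u, hu, v, hv, rfl⟩
    calc ‖f u - f v‖ ≤ ‖f u‖ + ‖f v‖ := norm_sub_le _ _
      _ ≤ 2 * C := by have := hbdd u hu; have := hbdd v hv; linarith
  · exact ⟨t, ht, τ, hτ, rfl⟩

lemma key_identity_aux (α ω : ℝ → ℝ)
    (hrepr : ∀ t ∈ Set.Ioi (0:ℝ), α t = t * Real.exp (ω t)) (t : ℝ) (ht : 0 < t) :
    (1 - alphaTilde α (t / (1 + t))) / (1 - t / (1 + t)) =
      (1 + t) / (1 + t * Real.exp (ω t)) := by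
  have h1t : (0:ℝ) < 1 + t := by linarith
  have h2 : 1 - t / (1 + t) = 1 / (1 + t) := by field_simp; ring
  have hy : t / (1 + t) / (1 - t / (1 + t)) = t := by
    rw [h2]; field_simp
  have hα : α (t / (1 + t) / (1 - t / (1 + t))) = t * Real.exp (ω t) := by
    rw [hy]; exact hrepr t ht
  have hd : (0:ℝ) < 1 + t * Real.exp (ω t) := by positivity
  unfold alphaTilde
  rw [hα, h2]
  field_simp
  ring

lemma f_approx_aux {t C w : ℝ} (ht : 0 < t) (hw : |w| ≤ C) :
    |(1 + t) / (1 + t * Real.exp w) - Real.exp (-w)| ≤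
      (Real.exp C + 1) * Real.exp (2 * C) / t := by
  have hd : (0:ℝ) < 1 + t * Real.exp w := by positivity
  have hwu : Real.exp w ≤ Real.exp C := Real.exp_le_exp.2 (le_of_abs_le hw)
  have hwl : Real.exp (-C) ≤ Real.exp w := Real.exp_le_exp.2 (by cases abs_le.1 hw; linarith)
  have heq : (1 + t) / (1 + t * Real.exp w) - Real.exp (-w) =
      (Real.exp w - 1) / (Real.exp w * (1 + t * Real.exp w)) := by
    rw [Real.exp_neg]
    field_simp
    ring
  rw [heq, abs_div]
  have hnum : |Real.exp w - 1| ≤ Real.exp C + 1 := by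
    rw [abs_sub_le_iff]
    constructor <;> nlinarith [Real.exp_pos w]
  have hdenpos : (0:ℝ) < t * Real.exp (-(2*C)) := by positivity
  have hden : t * Real.exp (-(2*C)) ≤ |Real.exp w * (1 + t * Real.exp w)| := by
    rw [abs_of_pos (by positivity)]
    have : Real.exp (-(2*C)) = Real.exp (-C) * Real.exp (-C) := by
      rw [← Real.exp_add]; ring_nf
    nlinarith [Real.exp_pos (-C), Real.exp_pos w,
      mul_le_mul hwl hwl (le_of_lt (Real.exp_pos (-C))) (le_of_lt (Real.exp_pos w))]
  calc |Real.exp w - 1| / |Real.exp w * (1 + t * Real.exp w)|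
      ≤ (Real.exp C + 1) / (t * Real.exp (-(2*C))) :=
        div_le_div₀ (by positivity) hnum hdenpos hden
    _ = (Real.exp C + 1) * Real.exp (2 * C) / t := by
        rw [Real.exp_neg]; field_simp

lemma f_near_one_aux {t C w : ℝ} (ht : 0 < t) (hw : |w| ≤ C) :
    |(1 + t) / (1 + t * Real.exp w) - 1| ≤ (1 + Real.exp C) * t := by
  have hd : (0:ℝ) < 1 + t * Real.exp w := by positivity
  have hwu : Real.exp w ≤ Real.exp C := Real.exp_le_exp.2 (le_of_abs_le hw)
  have heq : (1 + t) / (1 + t * Real.exp w) - 1 =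
      t * (1 - Real.exp w) / (1 + t * Real.exp w) := by
    field_simp
    ring
  rw [heq, abs_div, abs_of_pos hd]
  calc |t * (1 - Real.exp w)| / (1 + t * Real.exp w)
      ≤ |t * (1 - Real.exp w)| := div_le_self (abs_nonneg _) (by nlinarith [Real.exp_pos w])
    _ = t * |1 - Real.exp w| := by rw [abs_mul, abs_of_pos ht]
    _ ≤ (1 + Real.exp C) * t := by
        have : |1 - Real.exp w| ≤ 1 + Real.exp C := by
          rw [abs_sub_le_iff]; constructor <;> nlinarith [Real.exp_pos w]
        nlinarith

theorem transplanted_factor_SO (α : ℝ → ℝ) (ω : ℝ → ℝ)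
    (hω_so : SO ω)
    (hrepr : ∀ t ∈ Set.Ioi (0:ℝ), α t = t * Real.exp (ω t)) :
    (∃ m M : ℝ, 0 < m ∧
      (∀ y ∈ Set.Ioo (0:ℝ) 1, m ≤ (1 - alphaTilde α y) / (1 - y)) ∧
      (∀ y ∈ Set.Ioo (0:ℝ) 1, (1 - alphaTilde α y) / (1 - y) ≤ M)) ∧
    SO (fun t => (1 + t) / (1 + t * Real.exp (ω t))) ∧
    Tendsto (fun t => (1 + t) / (1 + t * Real.exp (ω t)))
      (nhdsWithin 0 (Set.Ioi 0)) (nhds 1) ∧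
    (∀ t ∈ Set.Ioi (0:ℝ),
      (1 - alphaTilde α (t / (1 + t))) / (1 - t / (1 + t)) =
        (1 + t) / (1 + t * Real.exp (ω t))) := by
  obtain ⟨hcont, ⟨C, hC⟩, hosc⟩ := hω_so
  have hC0 : 0 ≤ C := le_trans (norm_nonneg _) (hC 1 (Set.mem_Ioi.2 one_pos))
  have hCabs : ∀ t : ℝ, 0 < t → |ω t| ≤ C := fun t ht => by
    have := hC t (Set.mem_Ioi.2 ht); rwa [Real.norm_eq_abs] at this
  have hkey := key_identity_aux α ω hrepr
  refine ⟨⟨Real.exp (-C), Real.exp C, Real.exp_pos _, ?_, ?_⟩, ⟨?_, ⟨Real.exp C, ?_⟩, ?_⟩,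
    ?_, fun t ht => hkey t ht⟩
  -- lower bound
  · intro y hy
    have h1y : 0 < 1 - y := by linarith [hy.2]
    have ht : 0 < y / (1 - y) := div_pos hy.1 h1y
    have hyt : y / (1 - y) / (1 + y / (1 - y)) = y := by field_simp; ring
    calc Real.exp (-C) ≤ (1 + y / (1 - y)) / (1 + y / (1 - y) * Real.exp (ω (y / (1 - y)))) :=
          (f_bounds_aux ht hC0 (hCabs _ ht)).1
      _ = (1 - alphaTilde α y) / (1 - y) := by rw [← hkey _ ht, hyt]
  -- upper bound
  · intro y hy
    have h1y : 0 < 1 - y := by linarith [hy.2]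
    have ht : 0 < y / (1 - y) := div_pos hy.1 h1y
    have hyt : y / (1 - y) / (1 + y / (1 - y)) = y := by field_simp; ring
    calc (1 - alphaTilde α y) / (1 - y)
        = (1 + y / (1 - y)) / (1 + y / (1 - y) * Real.exp (ω (y / (1 - y)))) := by
          rw [← hkey _ ht, hyt]
      _ ≤ Real.exp C := (f_bounds_aux ht hC0 (hCabs _ ht)).2
  -- continuity
  · apply ContinuousOn.div
    · exact (continuous_const.add continuous_id).continuousOn
    · exact continuousOn_const.add
        (continuousOn_id.mul (Real.continuous_exp.comp_continuousOn hcont))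
    · intro t ht
      have h0 : (0:ℝ) < t := ht
      have := Real.exp_pos (ω t)
      nlinarith
  -- boundedness
  · intro t ht
    have h0 : (0:ℝ) < t := ht
    have hd : (0:ℝ) < 1 + t * Real.exp (ω t) := by positivity
    rw [Real.norm_eq_abs, abs_of_pos (div_pos (by linarith) hd)]
    exact (f_bounds_aux h0 hC0 (hCabs t h0)).2
  -- oscillation
  · intro l hl
    constructor
    · -- at 0
      apply squeeze_zero' (g := fun r => 2 * (1 + Real.exp C) * r)
        (Eventually.of_forall fun r => osc_nonneg_aux _ _ _)
      · filter_upwards [self_mem_nhdsWithin] with r hr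
        have hr0 : (0:ℝ) < r := hr
        have hlr : (0:ℝ) < l * r := mul_pos hl.1 hr0
        apply osc_le_aux (by positivity)
        intro t ht τ hτ
        have ht0 : 0 < t := lt_of_lt_of_le hlr ht.1
        have hτ0 : 0 < τ := lt_of_lt_of_le hlr hτ.1
        have h1 := f_near_one_aux ht0 (hCabs t ht0)
        have h2 := f_near_one_aux hτ0 (hCabs τ hτ0)
        have hE : 0 < 1 + Real.exp C := by positivity
        calc ‖(1 + t) / (1 + t * Real.exp (ω t)) - (1 + τ) / (1 + τ * Real.exp (ω τ))‖
            ≤ |(1 + t) / (1 + t * Real.exp (ω t)) - 1| +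
              |(1 + τ) / (1 + τ * Real.exp (ω τ)) - 1| := by
              rw [Real.norm_eq_abs]
              refine le_trans (abs_sub_le _ 1 _) ?_
              rw [abs_sub_comm (1:ℝ)]
          _ ≤ 2 * (1 + Real.exp C) * r := by nlinarith [ht.2, hτ.2]
      · have : Tendsto (fun r : ℝ => 2 * (1 + Real.exp C) * r) (nhds 0) (nhds 0) := by
          have h : Tendsto (fun r : ℝ => 2 * (1 + Real.exp C) * r) (nhds 0)
              (nhds (2 * (1 + Real.exp C) * 0)) := (continuous_const.mul continuous_id).tendsto (0:ℝ)
          simpa using h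
        exact this.mono_left nhdsWithin_le_nhds
    · -- at ∞
      set K := (Real.exp C + 1) * Real.exp (2 * C) with hK
      have hKpos : 0 < K := by positivity
      apply squeeze_zero'
        (g := fun r => 2 * K / (l * r) + Real.exp C * osc ω (l * r) r)
        (Eventually.of_forall fun r => osc_nonneg_aux _ _ _)
      · filter_upwards [eventually_gt_atTop 0] with r hr0
        have hlr : (0:ℝ) < l * r := mul_pos hl.1 hr0
        apply osc_le_aux (add_nonneg (by positivity)
          (mul_nonneg (Real.exp_pos C).le (osc_nonneg_aux _ _ _)))
        intro t ht τ hτ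
        have ht0 : 0 < t := lt_of_lt_of_le hlr ht.1
        have hτ0 : 0 < τ := lt_of_lt_of_le hlr hτ.1
        have h1 := f_approx_aux ht0 (hCabs t ht0)
        have h2 := f_approx_aux hτ0 (hCabs τ hτ0)
        have h3 : |Real.exp (-(ω t)) - Real.exp (-(ω τ))| ≤
            Real.exp C * |ω t - ω τ| := by
          have h := exp_lip_aux (C := C) (a := -(ω t)) (b := -(ω τ))
            (by rw [abs_neg]; exact hCabs t ht0) (by rw [abs_neg]; exact hCabs τ hτ0)
          calc |Real.exp (-(ω t)) - Real.exp (-(ω τ))|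
              ≤ Real.exp C * |(-(ω t)) - (-(ω τ))| := h
            _ = Real.exp C * |ω t - ω τ| := by
                rw [show (-(ω t)) - (-(ω τ)) = -(ω t - ω τ) by ring, abs_neg]
        have h4 : |ω t - ω τ| ≤ osc ω (l * r) r := by
          have := le_osc_aux (f := ω) (C := C)
            (fun u hu => hC u (Set.mem_Ioi.2 (lt_of_lt_of_le hlr hu.1))) ht hτ
          rwa [Real.norm_eq_abs] at this
        have h5 : K / t ≤ K / (l * r) := by
          apply div_le_div_of_nonneg_left (le_of_lt hKpos) hlr ht.1
        have h6 : K / τ ≤ K / (l * r) := by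
          apply div_le_div_of_nonneg_left (le_of_lt hKpos) hlr hτ.1
        have hEC : (0:ℝ) < Real.exp C := Real.exp_pos C
        have h7 : |Real.exp (-(ω τ)) - (1 + τ) / (1 + τ * Real.exp (ω τ))| ≤ K / τ := by
          rw [abs_sub_comm]; exact h2
        have h8 := mul_le_mul_of_nonneg_left h4 (le_of_lt hEC)
        calc ‖(1 + t) / (1 + t * Real.exp (ω t)) - (1 + τ) / (1 + τ * Real.exp (ω τ))‖
            ≤ |(1 + t) / (1 + t * Real.exp (ω t)) - Real.exp (-(ω t))| +
              (|Real.exp (-(ω t)) - Real.exp (-(ω τ))| +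
               |Real.exp (-(ω τ)) - (1 + τ) / (1 + τ * Real.exp (ω τ))|) := by
              rw [Real.norm_eq_abs]
              refine le_trans (abs_sub_le _ (Real.exp (-(ω t))) _) ?_
              have := abs_sub_le (Real.exp (-(ω t))) (Real.exp (-(ω τ)))
                ((1 + τ) / (1 + τ * Real.exp (ω τ)))
              linarith
          _ ≤ 2 * K / (l * r) + Real.exp C * osc ω (l * r) r := by
              have e1 : 2 * K / (l * r) = K / (l * r) + K / (l * r) := by ring
              linarith
      · have t1 : Tendsto (fun r : ℝ => 2 * K / (l * r)) atTop (nhds 0) := by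
          have hl0 : Tendsto (fun r : ℝ => l * r) atTop atTop :=
            Tendsto.const_mul_atTop hl.1 tendsto_id
          have := (tendsto_inv_atTop_zero.comp hl0).const_mul (2 * K)
          simpa [div_eq_mul_inv, Function.comp] using this
        have t2 := ((hosc l hl).2).const_mul (Real.exp C)
        have := t1.add t2
        simpa using this
  -- limit at 0
  · have hnum : Tendsto (fun t : ℝ => 1 + t) (nhdsWithin 0 (Set.Ioi 0)) (nhds 1) := by
      have : Tendsto (fun t : ℝ => 1 + t) (nhds 0) (nhds 1) := by
        have h : Tendsto (fun t : ℝ => 1 + t) (nhds 0) (nhds (1 + 0)) :=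
          (continuous_const.add continuous_id).tendsto (0:ℝ)
        simpa using h
      exact this.mono_left nhdsWithin_le_nhds
    have hden : Tendsto (fun t : ℝ => 1 + t * Real.exp (ω t))
        (nhdsWithin 0 (Set.Ioi 0)) (nhds 1) := by
      have hg : Tendsto (fun t : ℝ => t * Real.exp (ω t))
          (nhdsWithin 0 (Set.Ioi 0)) (nhds 0) := by
        apply squeeze_zero'
          (g := fun t : ℝ => t * Real.exp C)
        · filter_upwards [self_mem_nhdsWithin] with t ht
          have : (0:ℝ) < t := ht
          positivity
        · filter_upwards [self_mem_nhdsWithin] with t ht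
          have ht0 : (0:ℝ) < t := ht
          have := Real.exp_le_exp.2 (le_of_abs_le (hCabs t ht0))
          nlinarith
        · have : Tendsto (fun t : ℝ => t * Real.exp C) (nhds 0) (nhds 0) := by
            have h : Tendsto (fun t : ℝ => t * Real.exp C) (nhds 0) (nhds (0 * Real.exp C)) :=
              (continuous_id.mul continuous_const).tendsto (0:ℝ)
            simpa using h
          exact this.mono_left nhdsWithin_le_nhds
      simpa using (tendsto_const_nhds (x := (1:ℝ))).add hg
    have h : Tendsto (fun t => (1 + t) / (1 + t * Real.exp (ω t)))
        (nhdsWithin 0 (Set.Ioi 0)) (nhds (1 / 1)) := hnum.div hden one_ne_zero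
    simpa using h
end
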